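/- For an even integer k ≥ 2, the constant c(h_k) := ∫∫_{ℝ²} h_k(x,y) p(1,y) dx dy, where h_k(x,y) = [sgn(x+y) exp(-2(x(x+y))^+ )]^k (taking T = 1), equals 2∫_0^∞ Φ(-x) dx + (2/(2k-1)) ∫_0^∞ exp(2k(k-1)x²/(2k-1)²) Φ(-x) dx, where Φ is the standard normal CDF. -/

import Mathlib

open MeasureTheory Set

noncomputable def stdGauss (y : ℝ) : ℝ :=
  (Real.sqrt (2 * Real.pi))⁻¹ * Real.exp (-y^2 / 2)

noncomputable def stdNormalCDF (z : ℝ) : ℝ := ∫ u in Set.Iic z, stdGauss u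

lemma stdGauss_nonneg (y : ℝ) : 0 ≤ stdGauss y := by
  unfold stdGauss
  positivity

lemma stdGauss_neg (y : ℝ) : stdGauss (-y) = stdGauss y := by
  simp [stdGauss, neg_sq]

lemma stdGauss_eq (y : ℝ) : stdGauss y = (Real.sqrt (2 * Real.pi))⁻¹ * Real.exp (-(2⁻¹) * y^2) := by
  rw [stdGauss]; ring_nf

lemma integrable_stdGauss : Integrable stdGauss := by
  have h := (integrable_exp_neg_mul_sq (by norm_num : (0:ℝ) < 2⁻¹)).const_mul
    (Real.sqrt (2 * Real.pi))⁻¹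
  exact h.congr (Filter.Eventually.of_forall fun y => (stdGauss_eq y).symm)

lemma integral_stdGauss : ∫ y, stdGauss y = 1 := by
  have : ∫ y, stdGauss y = (Real.sqrt (2 * Real.pi))⁻¹ * ∫ y : ℝ, Real.exp (-(2⁻¹) * y^2) := by
    rw [← integral_const_mul]
    exact integral_congr_ae (by filter_upwards with y using stdGauss_eq y)
  rw [this, integral_gaussian]
  have h2 : Real.pi / 2⁻¹ = 2 * Real.pi := by ring
  rw [h2, inv_mul_cancel₀]
  positivity

lemma stdNormalCDF_neg_eq (z : ℝ) : stdNormalCDF (-z) = ∫ u in Ioi z, stdGauss u := by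
  rw [stdNormalCDF, ← integral_comp_neg_Ioi]
  exact setIntegral_congr_fun measurableSet_Ioi fun u _ => stdGauss_neg u

lemma integral_Ioi_shift (f : ℝ → ℝ) (t c : ℝ) :
    ∫ y in Ioi t, f (y + c) = ∫ y in Ioi (t + c), f y := by
  rw [← integral_indicator measurableSet_Ioi, ← integral_indicator measurableSet_Ioi,
    ← integral_add_right_eq_self (fun y => (Ioi (t + c)).indicator f y) c]
  congr 1
  ext y
  simp only [indicator, mem_Ioi]
  by_cases h : t < y
  · rw [if_pos h, if_pos (by linarith)]
  · rw [if_neg h, if_neg (by intro h'; exact h (by linarith))]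

lemma stdNormalCDF_zero : stdNormalCDF 0 = 1/2 := by
  have h1 : stdNormalCDF 0 + (∫ u in Ioi (0:ℝ), stdGauss u) = 1 := by
    rw [stdNormalCDF, intervalIntegral.integral_Iic_add_Ioi integrable_stdGauss.integrableOn
      integrable_stdGauss.integrableOn, integral_stdGauss]
  have h2 : (∫ u in Ioi (0:ℝ), stdGauss u) = stdNormalCDF 0 := by
    rw [← neg_zero, stdNormalCDF_neg_eq, neg_zero]
  rw [h2] at h1; linarith

lemma stdNormalCDF_mono : Monotone stdNormalCDF := by
  intro a b hab
  exact setIntegral_mono_set integrable_stdGauss.integrableOn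
    (Filter.Eventually.of_forall stdGauss_nonneg)
    (HasSubset.Subset.eventuallyLE (Iic_subset_Iic.mpr hab))

lemma stdNormalCDF_measurable : Measurable stdNormalCDF :=
  stdNormalCDF_mono.measurable

lemma stdNormalCDF_nonneg (z : ℝ) : 0 ≤ stdNormalCDF z :=
  setIntegral_nonneg measurableSet_Iic fun y _ => stdGauss_nonneg y

lemma stdNormalCDF_neg_le (z : ℝ) (hz : 0 ≤ z) :
    stdNormalCDF (-z) ≤ (1/2) * Real.exp (-z^2/2) := by
  rw [stdNormalCDF_neg_eq]
  have key : ∀ u ∈ Ioi z, stdGauss u ≤ Real.exp (-z^2/2) * stdGauss (u + -z) := by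
    intro u hu
    simp only [mem_Ioi] at hu
    rw [stdGauss, stdGauss, ← mul_assoc, mul_comm (Real.exp (-z^2/2)), mul_assoc,
      ← Real.exp_add]
    refine mul_le_mul_of_nonneg_left (Real.exp_le_exp.mpr ?_) (by positivity)
    nlinarith [sq_nonneg (u - z)]
  calc ∫ u in Ioi z, stdGauss u
      ≤ ∫ u in Ioi z, Real.exp (-z^2/2) * stdGauss (u + -z) := by
        refine setIntegral_mono_on integrable_stdGauss.integrableOn ?_ measurableSet_Ioi key
        exact ((integrable_stdGauss.comp_add_right (-z)).const_mul _).integrableOn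
    _ = Real.exp (-z^2/2) * ∫ u in Ioi z, stdGauss (u + -z) := by
        rw [← integral_const_mul]
    _ = Real.exp (-z^2/2) * stdNormalCDF 0 := by
        rw [integral_Ioi_shift, add_neg_cancel, ← neg_zero, stdNormalCDF_neg_eq, neg_zero]
    _ = (1/2) * Real.exp (-z^2/2) := by rw [stdNormalCDF_zero]; ring

/-- `h_k` with `T = 1`. -/
noncomputable def hFun (k : ℕ) (x y : ℝ) : ℝ :=
  (Real.sign (x + y) * Real.exp (-2 * max (x * (x + y)) 0))^k

lemma gauss_shift (a x y : ℝ) :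
    Real.exp (-(2*a) * (x*(x+y))) * stdGauss y
      = Real.exp (2*a*(a-1)*x^2) * stdGauss (y + 2*a*x) := by
  unfold stdGauss
  have h : ∀ A B : ℝ, Real.exp A * ((Real.sqrt (2*Real.pi))⁻¹ * Real.exp B)
      = (Real.sqrt (2*Real.pi))⁻¹ * Real.exp (A + B) := fun A B => by
    rw [Real.exp_add]; ring
  rw [h, h]
  congr 2
  ring

lemma ae_ne (c : ℝ) : ∀ᵐ y : ℝ, y ≠ c := by
  rw [ae_iff]
  simpa using measure_singleton (μ := (volume : Measure ℝ)) c

lemma inner_pos (k : ℕ) (hke : Even k) (x : ℝ) (hx : 0 < x) :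
    ∫ y, hFun k x y * stdGauss y
      = stdNormalCDF (-x)
        + Real.exp (2*(k:ℝ)*((k:ℝ)-1)*x^2) * stdNormalCDF (-((2*(k:ℝ)-1)*x)) := by
  set C : ℝ := Real.exp (2*(k:ℝ)*((k:ℝ)-1)*x^2) with hC
  have hstep : ∀ᵐ y : ℝ, hFun k x y * stdGauss y
      = (Iic (-x)).indicator stdGauss y
        + (Ioi (-x)).indicator (fun y => C * stdGauss (y + 2*(k:ℝ)*x)) y := by
    filter_upwards [ae_ne (-x)] with y hy
    rcases lt_or_gt_of_ne hy with h | h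
    · -- y < -x
      have hxy : x + y < 0 := by linarith
      have hmax : max (x * (x + y)) 0 = 0 :=
        max_eq_right (le_of_lt (mul_neg_of_pos_of_neg hx hxy))
      rw [hFun, Real.sign_of_neg hxy, hmax, mul_zero, Real.exp_zero, mul_one,
        hke.neg_one_pow, one_mul,
        indicator_of_mem (by simpa [mem_Iic] using h.le),
        indicator_of_notMem (by simp [mem_Ioi]; linarith), add_zero]
    · -- y > -x
      have hxy : 0 < x + y := by linarith
      have hmax : max (x * (x + y)) 0 = x * (x + y) :=
        max_eq_left (le_of_lt (mul_pos hx hxy))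
      rw [hFun, Real.sign_of_pos hxy, one_mul, hmax, ← Real.exp_nat_mul,
        indicator_of_notMem (by simp [mem_Iic]; linarith),
        indicator_of_mem (by simpa [mem_Ioi] using h), zero_add]
      have : (k:ℝ) * (-2 * (x * (x + y))) = -(2*(k:ℝ)) * (x*(x+y)) := by ring
      rw [this, gauss_shift]
  rw [integral_congr_ae hstep, integral_add
      (integrable_stdGauss.indicator measurableSet_Iic)
      (((integrable_stdGauss.comp_add_right (2*(k:ℝ)*x)).const_mul C).indicator
        measurableSet_Ioi),
    integral_indicator measurableSet_Iic, integral_indicator measurableSet_Ioi]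
  congr 1
  rw [integral_const_mul, integral_Ioi_shift stdGauss (-x) (2*(k:ℝ)*x),
    show -x + 2*(k:ℝ)*x = (2*(k:ℝ)-1)*x by ring, ← stdNormalCDF_neg_eq]

lemma hFun_neg (k : ℕ) (hke : Even k) (x y : ℝ) : hFun k (-x) y = hFun k x (-y) := by
  unfold hFun
  rw [show -x * (-x + y) = x * (x + -y) by ring, show -x + y = -(x + -y) by ring,
    Real.sign_neg, neg_mul]
  exact hke.neg_pow _

lemma inner_symm (k : ℕ) (hke : Even k) (x : ℝ) :
    ∫ y, hFun k (-x) y * stdGauss y = ∫ y, hFun k x y * stdGauss y := by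
  calc ∫ y, hFun k (-x) y * stdGauss y
      = ∫ y, hFun k x (-y) * stdGauss (-y) := by
        refine integral_congr_ae (Filter.Eventually.of_forall fun y => ?_)
        dsimp only
        rw [hFun_neg k hke, stdGauss_neg]
    _ = ∫ y, hFun k x y * stdGauss y :=
        integral_neg_eq_self (fun y => hFun k x y * stdGauss y) volume

lemma inner_zero (k : ℕ) (hke : Even k) :
    ∫ y, hFun k 0 y * stdGauss y = 1 := by
  have hstep : ∀ᵐ y : ℝ, hFun k 0 y * stdGauss y = stdGauss y := by
    filter_upwards [ae_ne 0] with y hy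
    have : hFun k 0 y = 1 := by
      rw [hFun, zero_add, zero_mul, max_self, mul_zero, Real.exp_zero, mul_one]
      rcases lt_or_gt_of_ne hy with h | h
      · rw [Real.sign_of_neg h]; exact hke.neg_one_pow
      · rw [Real.sign_of_pos h, one_pow]
    rw [this, one_mul]
  rw [integral_congr_ae hstep, integral_stdGauss]

lemma inner_eq (k : ℕ) (hke : Even k) (x : ℝ) :
    ∫ y, hFun k x y * stdGauss y
      = stdNormalCDF (-|x|)
        + Real.exp (2*(k:ℝ)*((k:ℝ)-1)*|x|^2) * stdNormalCDF (-((2*(k:ℝ)-1)*|x|)) := by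
  rcases lt_trichotomy x 0 with h | h | h
  · rw [abs_of_neg h]
    have hs := inner_symm k hke (-x)
    rw [neg_neg] at hs
    rw [hs]
    exact inner_pos k hke (-x) (by linarith)
  · subst h
    rw [inner_zero k hke]
    simp [stdNormalCDF_zero]
    norm_num
  · rw [abs_of_pos h]
    exact inner_pos k hke x h

theorem skew_bm_constant_even (k : ℕ) (hk : 2 ≤ k) (hke : Even k) :
    ∫ x : ℝ, ∫ y : ℝ, hFun k x y * stdGauss y
      = 2 * (∫ x in Set.Ioi (0 : ℝ), stdNormalCDF (-x)) +
        (2 / (2 * (k : ℝ) - 1)) *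
          ∫ x in Set.Ioi (0 : ℝ),
            Real.exp (2 * k * ((k : ℝ) - 1) * x^2 / (2 * (k : ℝ) - 1)^2) *
              stdNormalCDF (-x) := by
  have hk1 : (1:ℝ) ≤ (k:ℝ) := by exact_mod_cast Nat.one_le_of_lt hk
  have hc : (0:ℝ) < 2 * (k:ℝ) - 1 := by linarith
  set G : ℝ → ℝ := fun t =>
    stdNormalCDF (-t) + Real.exp (2*(k:ℝ)*((k:ℝ)-1)*t^2) * stdNormalCDF (-((2*(k:ℝ)-1)*t))
    with hG
  have h1 : ∫ x : ℝ, ∫ y : ℝ, hFun k x y * stdGauss y = ∫ x : ℝ, G |x| :=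
    integral_congr_ae (Filter.Eventually.of_forall fun x => inner_eq k hke x)
  rw [h1, integral_comp_abs]
  -- integrability of the two pieces on Ioi 0
  have hgauss : Integrable (fun x : ℝ => (1/2) * Real.exp (-(2⁻¹) * x^2)) :=
    (integrable_exp_neg_mul_sq (by norm_num : (0:ℝ) < 2⁻¹)).const_mul _
  have hbound1 : ∀ x ∈ Ioi (0:ℝ), ‖stdNormalCDF (-x)‖ ≤ (1/2) * Real.exp (-(2⁻¹) * x^2) := by
    intro x hx
    rw [Real.norm_of_nonneg (stdNormalCDF_nonneg _)]
    have := stdNormalCDF_neg_le x (le_of_lt hx)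
    calc stdNormalCDF (-x) ≤ (1/2) * Real.exp (-x^2/2) := this
      _ = (1/2) * Real.exp (-(2⁻¹) * x^2) := by ring_nf
  have hInt1 : IntegrableOn (fun x => stdNormalCDF (-x)) (Ioi (0:ℝ)) := by
    refine Integrable.mono hgauss.integrableOn
      ((stdNormalCDF_measurable.comp measurable_neg).aestronglyMeasurable) ?_
    rw [ae_restrict_iff' measurableSet_Ioi]
    filter_upwards with x hx
    refine (hbound1 x hx).trans ?_
    rw [Real.norm_eq_abs]
    exact le_abs_self _
  have hbound2 : ∀ x ∈ Ioi (0:ℝ),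
      ‖Real.exp (2*(k:ℝ)*((k:ℝ)-1)*x^2) * stdNormalCDF (-((2*(k:ℝ)-1)*x))‖
        ≤ (1/2) * Real.exp (-(2⁻¹) * x^2) := by
    intro x hx
    simp only [mem_Ioi] at hx
    have hcx : 0 ≤ (2*(k:ℝ)-1)*x := by positivity
    rw [Real.norm_of_nonneg (mul_nonneg (Real.exp_nonneg _) (stdNormalCDF_nonneg _))]
    calc Real.exp (2*(k:ℝ)*((k:ℝ)-1)*x^2) * stdNormalCDF (-((2*(k:ℝ)-1)*x))
        ≤ Real.exp (2*(k:ℝ)*((k:ℝ)-1)*x^2) * ((1/2) * Real.exp (-((2*(k:ℝ)-1)*x)^2/2)) := by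
          exact mul_le_mul_of_nonneg_left (stdNormalCDF_neg_le _ hcx) (Real.exp_nonneg _)
      _ = (1/2) * Real.exp (2*(k:ℝ)*((k:ℝ)-1)*x^2 + -((2*(k:ℝ)-1)*x)^2/2) := by
          rw [Real.exp_add]; ring
      _ = (1/2) * Real.exp (-(2⁻¹) * x^2) := by
          congr 1
          ring
  have hmeas2 : AEStronglyMeasurable
      (fun x : ℝ => Real.exp (2*(k:ℝ)*((k:ℝ)-1)*x^2) * stdNormalCDF (-((2*(k:ℝ)-1)*x)))
      (volume.restrict (Ioi (0:ℝ))) := by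
    apply Measurable.aestronglyMeasurable
    have m1 : Measurable fun x : ℝ => 2*(k:ℝ)*((k:ℝ)-1)*x^2 :=
      (measurable_id.pow_const 2).const_mul _
    have m2 : Measurable fun x : ℝ => -((2*(k:ℝ)-1)*x) :=
      (measurable_const_mul _).neg
    exact (Real.measurable_exp.comp m1).mul (stdNormalCDF_measurable.comp m2)
  have hInt2 : IntegrableOn
      (fun x => Real.exp (2*(k:ℝ)*((k:ℝ)-1)*x^2) * stdNormalCDF (-((2*(k:ℝ)-1)*x)))
      (Ioi (0:ℝ)) := by
    refine Integrable.mono hgauss.integrableOn hmeas2 ?_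
    rw [ae_restrict_iff' measurableSet_Ioi]
    filter_upwards with x hx
    refine (hbound2 x hx).trans ?_
    rw [Real.norm_eq_abs]
    exact le_abs_self _
  have hsplit : ∫ x in Ioi (0:ℝ), G x
      = (∫ x in Ioi (0:ℝ), stdNormalCDF (-x))
        + ∫ x in Ioi (0:ℝ),
            Real.exp (2*(k:ℝ)*((k:ℝ)-1)*x^2) * stdNormalCDF (-((2*(k:ℝ)-1)*x)) :=
    integral_add hInt1 hInt2
  rw [hsplit]
  -- substitution in the second integral
  have hsub : ∫ x in Ioi (0:ℝ),
      Real.exp (2*(k:ℝ)*((k:ℝ)-1)*x^2) * stdNormalCDF (-((2*(k:ℝ)-1)*x))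
      = (2*(k:ℝ)-1)⁻¹ * ∫ x in Ioi (0:ℝ),
          Real.exp (2 * k * ((k : ℝ) - 1) * x^2 / (2 * (k : ℝ) - 1)^2) * stdNormalCDF (-x) := by
    have key := integral_comp_mul_left_Ioi
      (fun u => Real.exp (2 * k * ((k : ℝ) - 1) * u^2 / (2 * (k : ℝ) - 1)^2) * stdNormalCDF (-u))
      0 hc
    rw [mul_zero] at key
    calc ∫ x in Ioi (0:ℝ),
        Real.exp (2*(k:ℝ)*((k:ℝ)-1)*x^2) * stdNormalCDF (-((2*(k:ℝ)-1)*x))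
        = ∫ x in Ioi (0:ℝ),
            (fun u => Real.exp (2 * k * ((k : ℝ) - 1) * u^2 / (2 * (k : ℝ) - 1)^2) *
              stdNormalCDF (-u)) ((2*(k:ℝ)-1)*x) := by
          refine setIntegral_congr_fun measurableSet_Ioi fun x _ => ?_
          dsimp only
          have : 2 * (k:ℝ) * ((k:ℝ) - 1) * ((2 * (k:ℝ) - 1) * x)^2 / (2 * (k : ℝ) - 1)^2
              = 2*(k:ℝ)*((k:ℝ)-1)*x^2 := by
            field_simp
          rw [this]
      _ = (2*(k:ℝ)-1)⁻¹ • ∫ x in Ioi (0:ℝ),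
            (fun u => Real.exp (2 * k * ((k : ℝ) - 1) * u^2 / (2 * (k : ℝ) - 1)^2) *
              stdNormalCDF (-u)) x := key
      _ = (2*(k:ℝ)-1)⁻¹ * ∫ x in Ioi (0:ℝ),
            Real.exp (2 * k * ((k : ℝ) - 1) * x^2 / (2 * (k : ℝ) - 1)^2) *
              stdNormalCDF (-x) := by rw [smul_eq_mul]
  rw [hsub]
  ring
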